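/- Let S be a monoid, A a right S-act, and B a subact of A. Then A is Noetherian if and only if both B and the Rees factor act A/B are Noetherian. -/

import Mathlib

/-- A subact of a right `S`-act `A` (with action `act`): a nonempty subset closed
under the action. -/
def IsSubact {S A : Type*} (act : A → S → A) (B : Set A) : Prop :=
  B.Nonempty ∧ ∀ b ∈ B, ∀ s : S, act b s ∈ B

/-- A right `S`-act is Noetherian if it satisfies the ascending chain condition on its
subacts: every ascending chain of subacts eventually stabilizes. -/
def IsNoetherianAct {S A : Type*} (act : A → S → A) : Prop :=
  ∀ c : ℕ → Set A, (∀ n, IsSubact act (c n)) → (∀ n, c n ⊆ c (n + 1)) →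
    ∃ N, ∀ n, N ≤ n → c n = c N

/-- The Rees congruence on `A` induced by a subset `B ⊆ A`: all elements of `B` are
identified (to a single zero class), all other classes are singletons. -/
def reesSetoid {A : Type*} (B : Set A) : Setoid A where
  r x y := x = y ∨ (x ∈ B ∧ y ∈ B)
  iseqv := by
    refine ⟨fun x => Or.inl rfl, ?_, ?_⟩
    · rintro x y (rfl | ⟨hx, hy⟩)
      · exact Or.inl rfl
      · exact Or.inr ⟨hy, hx⟩
    · rintro x y z (rfl | ⟨hx, hy⟩) (rfl | ⟨hy', hz⟩)
      · exact Or.inl rfl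
      · exact Or.inr ⟨hy', hz⟩
      · exact Or.inr ⟨hx, hy⟩
      · exact Or.inr ⟨hx, hz⟩

/-- The induced action of `S` on the Rees factor act `A/B`, for a subact `B` of `A`. -/
def reesAct {S A : Type*} (act : A → S → A) (B : Set A)
    (hB : ∀ b ∈ B, ∀ s : S, act b s ∈ B) :
    Quotient (reesSetoid B) → S → Quotient (reesSetoid B) := fun c s =>
  Quotient.liftOn c (fun a => Quotient.mk (reesSetoid B) (act a s))
    (fun a b hab => by
      have h : a = b ∨ (a ∈ B ∧ b ∈ B) := hab
      rcases h with rfl | ⟨ha, hb⟩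
      · rfl
      · exact Quotient.sound (Or.inr ⟨hB a ha s, hB b hb s⟩))

/-- The induced action of `S` on a subact `B` of `A`. -/
def subAct {S A : Type*} (act : A → S → A) (B : Set A)
    (hB : ∀ b ∈ B, ∀ s : S, act b s ∈ B) : B → S → B :=
  fun b s => ⟨act b.1 s, hB b.1 b.2 s⟩

/-- Let `S` be a monoid, `A` a right `S`-act and `B` a subact of `A`.
Then `A` is Noetherian if and only if both `B` and the Rees factor act `A/B` are
Noetherian. -/
theorem noetherian_iff_subact_and_rees_factor {S A : Type*} [Monoid S]
    (act : A → S → A)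
    (hact_one : ∀ a : A, act a 1 = a)
    (hact_mul : ∀ (a : A) (s t : S), act a (s * t) = act (act a s) t)
    (B : Set A) (hBne : B.Nonempty) (hBcl : ∀ b ∈ B, ∀ s : S, act b s ∈ B) :
    IsNoetherianAct act ↔
      IsNoetherianAct (subAct act B hBcl) ∧
        IsNoetherianAct (reesAct act B hBcl) := by
  constructor
  · intro hA
    constructor
    · -- B is Noetherian
      intro c hc hmono
      have hsub : ∀ n, IsSubact act (Subtype.val '' c n) := by
        intro n
        obtain ⟨⟨b, hb⟩, hbm⟩ := (hc n).1
        refine ⟨⟨b, ⟨⟨b, hb⟩, hbm, rfl⟩⟩, ?_⟩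
        rintro _ ⟨⟨x, hx⟩, hxm, rfl⟩ s
        exact ⟨_, (hc n).2 _ hxm s, rfl⟩
      obtain ⟨N, hN⟩ := hA _ hsub (fun n => Set.image_mono (hmono n))
      exact ⟨N, fun n hn =>
        Set.image_injective.mpr Subtype.val_injective (hN n hn)⟩
    · -- A/B is Noetherian
      intro c hc hmono
      have hsub : ∀ n, IsSubact act
          (Quotient.mk (reesSetoid B) ⁻¹' c n) := by
        intro n
        refine ⟨?_, fun a ha s => (hc n).2 _ ha s⟩
        obtain ⟨q, hq⟩ := (hc n).1
        obtain ⟨a, rfl⟩ := Quotient.exists_rep q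
        exact ⟨a, hq⟩
      obtain ⟨N, hN⟩ := hA _ hsub (fun n => Set.preimage_mono (hmono n))
      refine ⟨N, fun n hn => ?_⟩
      have hsurj : Function.Surjective (Quotient.mk (reesSetoid B)) :=
        fun q => Quotient.exists_rep q
      exact Set.preimage_injective.mpr hsurj (hN n hn)
  · rintro ⟨hB, hQ⟩ c hc hmono
    have hchain : ∀ {m n : ℕ}, m ≤ n → c m ⊆ c n :=
      fun {m n} h => monotone_nat_of_le_succ hmono h
    -- the image chain in A/B is always a chain of subacts
    have hesub : ∀ n, IsSubact (reesAct act B hBcl)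
        (Quotient.mk (reesSetoid B) '' c n) := by
      intro n
      obtain ⟨a, ha⟩ := (hc n).1
      refine ⟨⟨_, a, ha, rfl⟩, ?_⟩
      rintro _ ⟨a, ha, rfl⟩ s
      exact ⟨act a s, (hc n).2 a ha s, rfl⟩
    obtain ⟨N2, hN2⟩ := hQ _ hesub (fun n => Set.image_mono (hmono n))
    by_cases hcase : ∃ n0, ∃ a ∈ c n0, a ∈ B
    · obtain ⟨n0, a0, ha0, ha0B⟩ := hcase
      -- chain within B
      have hdsub : ∀ n, IsSubact (subAct act B hBcl)
          {b : B | (b : A) ∈ c (n0 + n)} := by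
        intro n
        refine ⟨⟨⟨a0, ha0B⟩, hchain (Nat.le_add_right n0 n) ha0⟩, ?_⟩
        rintro ⟨b, hbB⟩ hb s
        exact (hc (n0 + n)).2 b hb s
      have hdmono : ∀ n, {b : B | (b : A) ∈ c (n0 + n)} ⊆
          {b : B | (b : A) ∈ c (n0 + (n + 1))} :=
        fun n b hb => hchain (by omega) hb
      obtain ⟨N1, hN1⟩ := hB _ hdsub hdmono
      refine ⟨max (n0 + N1) N2, fun n hn => ?_⟩
      refine subset_antisymm (fun a ha => ?_) (hchain hn)
      have hq : Quotient.mk (reesSetoid B) a ∈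
          Quotient.mk (reesSetoid B) '' c (max (n0 + N1) N2) := by
        have h1 := hN2 n (le_trans (le_max_right _ _) hn)
        have h2 := hN2 (max (n0 + N1) N2) (le_max_right _ _)
        rw [h2, ← h1]
        exact ⟨a, ha, rfl⟩
      obtain ⟨a', ha', heq⟩ := hq
      rcases (Quotient.exact heq : a' = a ∨ (a' ∈ B ∧ a ∈ B)) with rfl | ⟨_, haB⟩
      · exact ha'
      · -- a ∈ B, use the chain in B
        have hn0n : n0 ≤ n := le_trans (Nat.le_add_right n0 N1)
          (le_trans (le_max_left _ _) hn)
        have hn0N : n0 ≤ max (n0 + N1) N2 :=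
          le_trans (Nat.le_add_right n0 N1) (le_max_left _ _)
        have hmem : (⟨a, haB⟩ : B) ∈ {b : B | (b : A) ∈ c (n0 + (n - n0))} := by
          simpa [Nat.add_sub_cancel' hn0n] using ha
        have e1 := hN1 (n - n0) (by omega)
        have e2 := hN1 (max (n0 + N1) N2 - n0) (by omega)
        rw [e1, ← e2] at hmem
        simpa [Nat.add_sub_cancel' hn0N] using hmem
    · -- c n never meets B: quotient map is injective on c n
      push_neg at hcase
      refine ⟨N2, fun n hn => ?_⟩
      refine subset_antisymm (fun a ha => ?_) (hchain hn)
      have hq : Quotient.mk (reesSetoid B) a ∈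
          Quotient.mk (reesSetoid B) '' c N2 := by
        rw [← hN2 n hn]
        exact ⟨a, ha, rfl⟩
      obtain ⟨a', ha', heq⟩ := hq
      rcases (Quotient.exact heq : a' = a ∨ (a' ∈ B ∧ a ∈ B)) with rfl | ⟨_, haB⟩
      · exact ha'
      · exact absurd haB (hcase n a ha)
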